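/- Let l ≥ 2, let ξ₁,…,ξ_l be pairwise distinct real numbers, let α₁,…,α_{l−1} be pairwise distinct real numbers, and let m be an integer with 1 ≤ m ≤ l−1. Then ∑_{i=1}^{l} [∏_{k=1}^{l−1}(ξ_i − α_k)/Δ(ξ_i)] · (∏_{k=1, k≠i}^{l}(α_m − ξ_k))² = −p_nc(α_m) · Δ_m(α₁,…,α_{l−1}). -/

import Mathlib

open Finset

open Polynomial in
private lemma lagrange_key {l : ℕ} (hl : 2 ≤ l) (ξ : Fin l → ℝ)
    (hξ : Function.Injective ξ) (α : Fin (l - 1) → ℝ) (m : Fin (l - 1)) :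
    ∏ k ∈ univ.erase m, (α m - α k) =
      ∑ i : Fin l, (∏ k ∈ univ.erase m, (ξ i - α k)) *
        ((∏ j ∈ univ.erase i, (α m - ξ j)) / ∏ j ∈ univ.erase i, (ξ i - ξ j)) := by
  classical
  set Q : ℝ[X] := ∏ k ∈ (univ : Finset (Fin (l - 1))).erase m, (X - C (α k)) with hQdef
  have hinj : Set.InjOn ξ ((univ : Finset (Fin l)) : Set (Fin l)) := hξ.injOn
  have hdeg : Q.degree < (#(univ : Finset (Fin l)) : ℕ) := by
    rw [hQdef]
    have h1 : (∏ k ∈ (univ : Finset (Fin (l - 1))).erase m, (X - C (α k)) : ℝ[X]).degree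
        = #((univ : Finset (Fin (l - 1))).erase m) := by
      rw [Polynomial.degree_prod]
      simp [Polynomial.degree_X_sub_C]
    rw [h1]
    rw [Finset.card_erase_of_mem (mem_univ m), Finset.card_univ, Finset.card_univ,
      Fintype.card_fin, Fintype.card_fin]
    exact_mod_cast Nat.lt_of_le_of_lt (Nat.sub_le _ _) (by omega)
  have key := Lagrange.eq_interpolate (v := ξ) hinj hdeg
  have keval := congrArg (Polynomial.eval (α m)) key
  rw [Lagrange.interpolate_apply, Polynomial.eval_finset_sum] at keval
  have hQeval : ∀ t : ℝ, Q.eval t = ∏ k ∈ univ.erase m, (t - α k) := by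
    intro t; rw [hQdef]; simp [Polynomial.eval_prod]
  rw [hQeval] at keval
  rw [keval]
  refine Finset.sum_congr rfl fun i _ => ?_
  rw [Polynomial.eval_mul, Polynomial.eval_C, hQeval]
  congr 1
  rw [Lagrange.basis, Polynomial.eval_prod]
  rw [(Finset.prod_div_distrib _ _).symm]
  refine Finset.prod_congr rfl fun j hj => ?_
  rw [Lagrange.basisDivisor]
  simp [div_eq_inv_mul]

theorem g_theta_diagonal (l : ℕ) (hl : 2 ≤ l) (ξ : Fin l → ℝ)
    (hξ : Function.Injective ξ) (α : Fin (l - 1) → ℝ) (hα : Function.Injective α)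
    (m : Fin (l - 1)) :
    ∑ i : Fin l,
      (∏ k : Fin (l - 1), (ξ i - α k)) / (∏ j ∈ univ.erase i, (ξ i - ξ j)) *
        (∏ k ∈ univ.erase i, (α m - ξ k)) ^ 2 =
      -(∏ j : Fin l, (α m - ξ j)) * ∏ k ∈ univ.erase m, (α m - α k) := by
  classical
  set p : ℝ := ∏ j : Fin l, (α m - ξ j) with hp
  have hstep : ∀ i : Fin l,
      (∏ k : Fin (l - 1), (ξ i - α k)) / (∏ j ∈ univ.erase i, (ξ i - ξ j)) *
        (∏ k ∈ univ.erase i, (α m - ξ k)) ^ 2 =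
      -p * ((∏ k ∈ univ.erase m, (ξ i - α k)) *
        ((∏ j ∈ univ.erase i, (α m - ξ j)) / ∏ j ∈ univ.erase i, (ξ i - ξ j))) := by
    intro i
    have hΔ : (∏ j ∈ univ.erase i, (ξ i - ξ j)) ≠ 0 := by
      refine Finset.prod_ne_zero_iff.mpr fun j hj => ?_
      exact sub_ne_zero.mpr (fun e => (Finset.mem_erase.mp hj).1 (hξ e).symm)
    have h1 : (∏ k : Fin (l - 1), (ξ i - α k)) =
        (ξ i - α m) * ∏ k ∈ univ.erase m, (ξ i - α k) :=
      (Finset.mul_prod_erase univ _ (mem_univ m)).symm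
    have h2 : (ξ i - α m) * (∏ k ∈ univ.erase i, (α m - ξ k)) = -p := by
      rw [hp, ← Finset.mul_prod_erase univ _ (mem_univ i)]
      ring
    rw [h1]
    field_simp
    linear_combination ((∏ k ∈ univ.erase m, (ξ i - α k)) *
      (∏ k ∈ univ.erase i, (α m - ξ k))) * h2
  rw [Finset.sum_congr rfl fun i _ => hstep i, ← Finset.mul_sum,
    ← lagrange_key hl ξ hξ α m]
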